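/- (Two-parameter orthogonal maximal inequality) Let y(i,j), 1 ≤ i ≤ M, 1 ≤ j ≤ L, be mean-zero random variables that are pairwise uncorrelated: E[y(i,j)y(i',j')] = 0 unless (i,j) = (i',j'), with E[y(i,j)²] ≤ v. Then E[ max_{m₁ ≤ k ≤ m₂} ( ∑_{i=1}^k ∑_{j=1}^{N−k} y(i, N−j+1) )² ] ≤ [log₂(4m₁) log₂(4(N−m₁))]² · m₂ (N − m₁) · v, for any integers 1 ≤ m₁ < m₂ ≤ N−1, where y(i,j) is set to 0 outside the index range. -/

import Mathlib

open MeasureTheory Finset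

section Aux

variable {Ω : Type*} [MeasurableSpace Ω] {μ : MeasureTheory.Measure Ω}

private lemma aux_int_mul {f g : Ω → ℝ} (hf : MemLp f 2 μ) (hg : MemLp g 2 μ) :
    Integrable (fun ω => f ω * g ω) μ := by
  have h : MemLp (f • g) 1 μ := hg.smul hf
  rw [memLp_one_iff_integrable] at h
  exact h

private lemma aux_core (y : ℕ → ℕ → Ω → ℝ) (v : ℝ)
    (hL2 : ∀ i j, MemLp (y i j) 2 μ)
    (horth : ∀ i j i' j', (i, j) ≠ (i', j') → ∫ ω, y i j ω * y i' j' ω ∂μ = 0)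
    (hvar : ∀ i j, ∫ ω, (y i j ω) ^ 2 ∂μ ≤ v)
    (H : Finset (ℕ × ℕ)) (ε : ℕ × ℕ → ℝ) (hε : ∀ p, ε p ^ 2 ≤ 1) :
    ∫ ω, (∑ p ∈ H, ε p * y p.1 p.2 ω) ^ 2 ∂μ ≤ H.card * v := by
  have hintpq : ∀ p q : ℕ × ℕ,
      Integrable (fun ω => ε p * ε q * (y p.1 p.2 ω * y q.1 q.2 ω)) μ :=
    fun p q => (aux_int_mul (hL2 p.1 p.2) (hL2 q.1 q.2)).const_mul _
  have expand : ∀ ω : Ω, (∑ p ∈ H, ε p * y p.1 p.2 ω) ^ 2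
      = ∑ p ∈ H, ∑ q ∈ H, ε p * ε q * (y p.1 p.2 ω * y q.1 q.2 ω) := by
    intro ω
    rw [sq, Finset.sum_mul_sum]
    exact Finset.sum_congr rfl fun p _ => Finset.sum_congr rfl fun q _ => by ring
  have hoff : ∀ p q : ℕ × ℕ, p ≠ q →
      ∫ ω, ε p * ε q * (y p.1 p.2 ω * y q.1 q.2 ω) ∂μ = 0 := by
    intro p q hpq
    rw [integral_const_mul, horth p.1 p.2 q.1 q.2 (by simpa [Prod.ext_iff] using hpq), mul_zero]
  have hdiag : ∀ p : ℕ × ℕ, ∫ ω, ε p * ε p * (y p.1 p.2 ω * y p.1 p.2 ω) ∂μ ≤ v := by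
    intro p
    rw [integral_const_mul]
    have h0 : ∫ ω, y p.1 p.2 ω * y p.1 p.2 ω ∂μ = ∫ ω, (y p.1 p.2 ω) ^ 2 ∂μ := by
      simp_rw [sq]
    rw [h0]
    have hnn : 0 ≤ ∫ ω, (y p.1 p.2 ω) ^ 2 ∂μ := integral_nonneg fun ω => sq_nonneg _
    calc ε p * ε p * ∫ ω, (y p.1 p.2 ω) ^ 2 ∂μ
        ≤ 1 * ∫ ω, (y p.1 p.2 ω) ^ 2 ∂μ := by
          apply mul_le_mul_of_nonneg_right _ hnn
          calc ε p * ε p = ε p ^ 2 := (sq _).symm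
            _ ≤ 1 := hε p
      _ = ∫ ω, (y p.1 p.2 ω) ^ 2 ∂μ := one_mul _
      _ ≤ v := hvar p.1 p.2
  calc ∫ ω, (∑ p ∈ H, ε p * y p.1 p.2 ω) ^ 2 ∂μ
      = ∑ p ∈ H, ∑ q ∈ H, ∫ ω, ε p * ε q * (y p.1 p.2 ω * y q.1 q.2 ω) ∂μ := by
        simp_rw [expand]
        rw [integral_finset_sum H (fun p _ => integrable_finset_sum H fun q _ => hintpq p q)]
        exact Finset.sum_congr rfl fun p _ => integral_finset_sum H fun q _ => hintpq p q
    _ ≤ ∑ _p ∈ H, v := by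
        apply Finset.sum_le_sum
        intro p hp
        rw [Finset.sum_eq_single_of_mem p hp (fun q _ hqp => hoff p q (Ne.symm hqp))]
        exact hdiag p
    _ = H.card * v := by rw [Finset.sum_const, nsmul_eq_mul]

private lemma aux_core2 (y : ℕ → ℕ → Ω → ℝ) (v : ℝ)
    (hL2 : ∀ i j, MemLp (y i j) 2 μ)
    (horth : ∀ i j i' j', (i, j) ≠ (i', j') → ∫ ω, y i j ω * y i' j' ω ∂μ = 0)
    (hvar : ∀ i j, ∫ ω, (y i j ω) ^ 2 ∂μ ≤ v)
    (F G : Finset (ℕ × ℕ)) :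
    ∫ ω, (∑ p ∈ F, y p.1 p.2 ω - ∑ p ∈ G, y p.1 p.2 ω) ^ 2 ∂μ
      ≤ ((F \ G).card + (G \ F).card) * v := by
  classical
  set ε : ℕ × ℕ → ℝ := fun p => if p ∈ F then 1 else -1 with hεdef
  have hε : ∀ p, ε p ^ 2 ≤ 1 := by
    intro p; rw [hεdef]; by_cases h : p ∈ F <;> simp [h]
  have hkey : ∀ ω : Ω, ∑ p ∈ F, y p.1 p.2 ω - ∑ p ∈ G, y p.1 p.2 ω
      = ∑ p ∈ (F \ G) ∪ (G \ F), ε p * y p.1 p.2 ω := by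
    intro ω
    rw [Finset.sum_union disjoint_sdiff_sdiff]
    have h1 : ∑ p ∈ F \ G, ε p * y p.1 p.2 ω = ∑ p ∈ F \ G, y p.1 p.2 ω :=
      Finset.sum_congr rfl fun p hp => by
        rw [hεdef]; simp [(Finset.mem_sdiff.mp hp).1]
    have h2 : ∑ p ∈ G \ F, ε p * y p.1 p.2 ω = -∑ p ∈ G \ F, y p.1 p.2 ω := by
      rw [← Finset.sum_neg_distrib]
      exact Finset.sum_congr rfl fun p hp => by
        rw [hεdef]; simp [(Finset.mem_sdiff.mp hp).2]
    rw [h1, h2]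
    have hF := Finset.sum_inter_add_sum_sdiff F G (fun p => y p.1 p.2 ω)
    have hG := Finset.sum_inter_add_sum_sdiff G F (fun p => y p.1 p.2 ω)
    have hFG : ∑ p ∈ F ∩ G, y p.1 p.2 ω = ∑ p ∈ G ∩ F, y p.1 p.2 ω := by
      rw [Finset.inter_comm]
    linarith
  calc ∫ ω, (∑ p ∈ F, y p.1 p.2 ω - ∑ p ∈ G, y p.1 p.2 ω) ^ 2 ∂μ
      = ∫ ω, (∑ p ∈ (F \ G) ∪ (G \ F), ε p * y p.1 p.2 ω) ^ 2 ∂μ := by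
        apply integral_congr_ae
        exact Filter.Eventually.of_forall fun ω => by dsimp only; rw [hkey ω]
    _ ≤ ((F \ G) ∪ (G \ F)).card * v := aux_core y v hL2 horth hvar _ ε hε
    _ = ((F \ G).card + (G \ F).card) * v := by
        rw [Finset.card_union_of_disjoint disjoint_sdiff_sdiff]
        push_cast; ring

end Aux

set_option maxHeartbeats 1000000 in
theorem stmt_4 {Ω : Type*} [MeasurableSpace Ω] (μ : Measure Ω) [IsProbabilityMeasure μ]
    (N M L m₁ m₂ : ℕ) (hm₁ : 1 ≤ m₁) (hm : m₁ < m₂) (hm₂ : m₂ ≤ N - 1)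
    (hM : m₂ ≤ M) (hL : N - m₁ ≤ L)
    (y : ℕ → ℕ → Ω → ℝ) (v : ℝ) (hv : 0 < v)
    (hzero : ∀ i j, (i = 0 ∨ M < i ∨ j = 0 ∨ L < j) → y i j = 0)
    (hL2 : ∀ i j, MemLp (y i j) 2 μ)
    (hmean : ∀ i j, ∫ ω, y i j ω ∂μ = 0)
    (horth : ∀ i j i' j', (i, j) ≠ (i', j') → ∫ ω, y i j ω * y i' j' ω ∂μ = 0)
    (hvar : ∀ i j, ∫ ω, (y i j ω) ^ 2 ∂μ ≤ v) :
    ∫ ω, (⨆ k ∈ Finset.Icc m₁ m₂,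
        (∑ i ∈ Finset.Icc 1 k, ∑ j ∈ Finset.Icc 1 (N - k), y i (N - j + 1) ω) ^ 2) ∂μ
      ≤ (Real.logb 2 (4 * m₁) * Real.logb 2 (4 * (N - m₁ : ℕ))) ^ 2
          * m₂ * ((N - m₁ : ℕ) : ℝ) * v := by
  -- basic numeric facts
  have hN : 3 ≤ N := by omega
  have hm₂N : m₂ + 1 ≤ N := by omega
  have hm₁N : m₁ + 2 ≤ N := by omega
  -- the regions and partial sums
  set A : ℕ → Finset (ℕ × ℕ) := fun k => Finset.Icc 1 k ×ˢ Finset.Icc (k + 1) N with hA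
  set U : ℕ → Ω → ℝ := fun k ω => ∑ p ∈ A k, y p.1 p.2 ω with hUdef
  have hUmem : ∀ k, MemLp (U k) 2 μ := fun k =>
    memLp_finset_sum (A k) fun p _ => hL2 p.1 p.2
  -- reindexing of the statement's sums
  have hre : ∀ k, k ≤ N → ∀ ω : Ω,
      (∑ i ∈ Finset.Icc 1 k, ∑ j ∈ Finset.Icc 1 (N - k), y i (N - j + 1) ω) = U k ω := by
    intro k hk ω
    simp only [hUdef, hA]
    rw [Finset.sum_product]
    apply Finset.sum_congr rfl
    intro i _
    apply Finset.sum_nbij' (fun j => N - j + 1) (fun t => N - t + 1)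
    · intro a ha
      simp only [Finset.mem_Icc] at ha ⊢
      omega
    · intro a ha
      simp only [Finset.mem_Icc] at ha ⊢
      omega
    · intro a ha
      simp only [Finset.mem_Icc] at ha
      omega
    · intro a ha
      simp only [Finset.mem_Icc] at ha
      omega
    · intro a _
      rfl
  -- variance bound for differences
  have hvard : ∀ a d : ℕ, a + d ≤ N →
      ∫ ω, (U (a + d) ω - U a ω) ^ 2 ∂μ ≤ ((d : ℝ) * N) * v := by
    intro a d hadN
    have hsub1 : A (a + d) \ A a ⊆ Finset.Icc (a + 1) (a + d) ×ˢ Finset.Icc (a + d + 1) N := by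
      intro p hp
      simp only [hA, Finset.mem_sdiff, Finset.mem_product, Finset.mem_Icc] at hp ⊢
      omega
    have hsub2 : A a \ A (a + d) ⊆ Finset.Icc 1 a ×ˢ Finset.Icc (a + 1) (a + d) := by
      intro p hp
      simp only [hA, Finset.mem_sdiff, Finset.mem_product, Finset.mem_Icc] at hp ⊢
      omega
    have hc1 : (A (a + d) \ A a).card ≤ d * (N - (a + d)) := by
      refine (Finset.card_le_card hsub1).trans ?_
      rw [Finset.card_product, Nat.card_Icc, Nat.card_Icc]
      apply Nat.mul_le_mul <;> omega
    have hc2 : (A a \ A (a + d)).card ≤ a * d := by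
      refine (Finset.card_le_card hsub2).trans ?_
      rw [Finset.card_product, Nat.card_Icc, Nat.card_Icc]
      apply Nat.mul_le_mul <;> omega
    have hcards : (A (a + d) \ A a).card + (A a \ A (a + d)).card ≤ d * N := by
      have : d * (N - (a + d)) + a * d ≤ d * N := by
        calc d * (N - (a + d)) + a * d = d * ((N - (a + d)) + a) := by ring
          _ ≤ d * N := Nat.mul_le_mul_left d (by omega)
      omega
    calc ∫ ω, (U (a + d) ω - U a ω) ^ 2 ∂μ
        ≤ ((A (a + d) \ A a).card + (A a \ A (a + d)).card) * v :=
          aux_core2 y v hL2 horth hvar (A (a + d)) (A a)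
      _ ≤ ((d : ℝ) * N) * v := by
          apply mul_le_mul_of_nonneg_right _ hv.le
          exact_mod_cast hcards
  -- variance bound for U m₁
  have hvar0 : ∫ ω, (U m₁ ω) ^ 2 ∂μ ≤ ((m₁ : ℝ) * ((N - m₁ : ℕ) : ℝ)) * v := by
    have h := aux_core2 y v hL2 horth hvar (A m₁) ∅
    simp only [Finset.sum_empty, sub_zero, Finset.sdiff_empty, Finset.empty_sdiff,
      Finset.card_empty, Nat.cast_zero, add_zero] at h
    have hcard : (A m₁).card = m₁ * (N - m₁) := by
      simp only [hA]
      rw [Finset.card_product, Nat.card_Icc, Nat.card_Icc]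
      congr 1 <;> omega
    calc ∫ ω, (U m₁ ω) ^ 2 ∂μ = ∫ ω, (∑ p ∈ A m₁, y p.1 p.2 ω) ^ 2 ∂μ := rfl
      _ ≤ ((A m₁).card : ℝ) * v := h
      _ = ((m₁ : ℝ) * ((N - m₁ : ℕ) : ℝ)) * v := by rw [hcard]; push_cast; ring
  -- chaining setup
  set n : ℕ := m₂ - m₁ with hn
  have hn1 : 1 ≤ n := by omega
  set Hh : ℕ := Nat.log 2 n + 1 with hHh
  set Q : ℕ → Finset ℕ := fun ℓ =>
    (Finset.range (n + 1)).filter fun m => 2 ^ (ℓ + 1) * m + 2 ^ ℓ ≤ n with hQ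
  set G : Ω → ℝ := fun ω => ∑ ℓ ∈ Finset.range Hh, ∑ m ∈ Q ℓ,
    (U (m₁ + 2 ^ (ℓ + 1) * m + 2 ^ ℓ) ω - U (m₁ + 2 ^ (ℓ + 1) * m) ω) ^ 2 with hG
  have hGnn : ∀ ω, 0 ≤ G ω := fun ω =>
    Finset.sum_nonneg fun ℓ _ => Finset.sum_nonneg fun m _ => sq_nonneg _
  have hGint : Integrable G μ := by
    apply integrable_finset_sum
    intro ℓ _
    apply integrable_finset_sum
    intro m _
    have := ((hUmem (m₁ + 2 ^ (ℓ + 1) * m + 2 ^ ℓ)).sub (hUmem (m₁ + 2 ^ (ℓ + 1) * m))).integrable_sq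
    simpa [Pi.sub_apply] using this
  -- pointwise chaining bound
  have hchain : ∀ κ : ℕ, κ ≤ n → ∀ ω : Ω,
      (U (m₁ + κ) ω - U m₁ ω) ^ 2 ≤ (Hh : ℝ) * G ω := by
    intro κ hκ ω
    set c : ℕ → ℕ := fun ℓ => 2 ^ ℓ * (κ / 2 ^ ℓ) with hc
    have htel : U (m₁ + κ) ω - U m₁ ω
        = ∑ ℓ ∈ Finset.range Hh, (U (m₁ + c ℓ) ω - U (m₁ + c (ℓ + 1)) ω) := by
      rw [Finset.sum_range_sub' (fun ℓ => U (m₁ + c ℓ) ω) Hh]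
      have h0 : c 0 = κ := by simp [hc]
      have hH : c Hh = 0 := by
        have hlt : κ < 2 ^ Hh := lt_of_le_of_lt hκ (Nat.lt_pow_succ_log_self (by norm_num) n)
        simp [hc, Nat.div_eq_of_lt hlt]
      rw [h0, hH, add_zero]
    rw [htel]
    calc (∑ ℓ ∈ Finset.range Hh, (U (m₁ + c ℓ) ω - U (m₁ + c (ℓ + 1)) ω)) ^ 2
        ≤ (Finset.range Hh).card *
            ∑ ℓ ∈ Finset.range Hh, (U (m₁ + c ℓ) ω - U (m₁ + c (ℓ + 1)) ω) ^ 2 :=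
          sq_sum_le_card_mul_sum_sq
      _ = (Hh : ℝ) * ∑ ℓ ∈ Finset.range Hh, (U (m₁ + c ℓ) ω - U (m₁ + c (ℓ + 1)) ω) ^ 2 := by
          rw [Finset.card_range]
      _ ≤ (Hh : ℝ) * G ω := by
          apply mul_le_mul_of_nonneg_left _ (Nat.cast_nonneg Hh)
          rw [hG]
          apply Finset.sum_le_sum
          intro ℓ _
          set q : ℕ := κ / 2 ^ ℓ with hq
          have hdiv : κ / 2 ^ (ℓ + 1) = q / 2 := by
            rw [hq, pow_succ, ← Nat.div_div_eq_div_mul]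
          have hcl : c ℓ = 2 ^ ℓ * q := rfl
          have hcl1 : c (ℓ + 1) = 2 ^ (ℓ + 1) * (q / 2) := by
            rw [hc]; simp only [hdiv]
          have hqmod : 2 * (q / 2) + q % 2 = q := Nat.div_add_mod q 2
          have hclk : c ℓ ≤ κ := by
            rw [hcl, hq, mul_comm]
            exact Nat.div_mul_le_self κ (2 ^ ℓ)
          rcases Nat.mod_two_eq_zero_or_one q with h0 | h1
          · have heq : c (ℓ + 1) = c ℓ := by
              have h2 : 2 * (q / 2) = q := by omega
              calc c (ℓ + 1) = 2 ^ (ℓ + 1) * (q / 2) := hcl1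
                _ = 2 ^ ℓ * (2 * (q / 2)) := by rw [pow_succ]; ring
                _ = 2 ^ ℓ * q := by rw [h2]
                _ = c ℓ := hcl.symm
            rw [heq, sub_self]
            have hsnn : (0 : ℝ) ≤ ∑ m ∈ Q ℓ,
                (U (m₁ + 2 ^ (ℓ + 1) * m + 2 ^ ℓ) ω - U (m₁ + 2 ^ (ℓ + 1) * m) ω) ^ 2 :=
              Finset.sum_nonneg fun i _ =>
                sq_nonneg (U (m₁ + 2 ^ (ℓ + 1) * i + 2 ^ ℓ) ω - U (m₁ + 2 ^ (ℓ + 1) * i) ω)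
            simpa using hsnn
          · set m : ℕ := q / 2 with hmdef
            have hclval : c ℓ = 2 ^ (ℓ + 1) * m + 2 ^ ℓ := by
              have h2 : q = 2 * m + 1 := by omega
              calc c ℓ = 2 ^ ℓ * q := hcl
                _ = 2 ^ ℓ * (2 * m + 1) := by rw [← h2]
                _ = 2 ^ (ℓ + 1) * m + 2 ^ ℓ := by rw [pow_succ]; ring
            have hmQ : m ∈ Q ℓ := by
              rw [hQ]
              simp only [Finset.mem_filter, Finset.mem_range]
              constructor
              · have hqκ : q ≤ κ := by rw [hq]; exact Nat.div_le_self _ _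
                omega
              · rw [← hclval]; omega
            have heq2 : (U (m₁ + c ℓ) ω - U (m₁ + c (ℓ + 1)) ω) ^ 2
                = (U (m₁ + 2 ^ (ℓ + 1) * m + 2 ^ ℓ) ω - U (m₁ + 2 ^ (ℓ + 1) * m) ω) ^ 2 := by
              congr 3
              · omega
              · rw [hcl1]
            rw [heq2]
            exact Finset.single_le_sum
              (f := fun i => (U (m₁ + 2 ^ (ℓ + 1) * i + 2 ^ ℓ) ω - U (m₁ + 2 ^ (ℓ + 1) * i) ω) ^ 2)
              (fun i _ => sq_nonneg _) hmQ
  -- integral of G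
  have hQcard : ∀ ℓ : ℕ, (Q ℓ).card * 2 ^ ℓ ≤ n := by
    intro ℓ
    have hpow : 0 < 2 ^ ℓ := pow_pos (by norm_num) ℓ
    set B : ℕ := (n / 2 ^ ℓ + 1) / 2 with hB
    have hsubQ : Q ℓ ⊆ Finset.range B := by
      intro m hm
      rw [hQ] at hm
      simp only [Finset.mem_filter, Finset.mem_range] at hm
      have h2 : (2 * m + 1) * 2 ^ ℓ ≤ n := by
        calc (2 * m + 1) * 2 ^ ℓ = 2 ^ (ℓ + 1) * m + 2 ^ ℓ := by rw [pow_succ]; ring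
          _ ≤ n := hm.2
      have h3 : 2 * m + 1 ≤ n / 2 ^ ℓ := (Nat.le_div_iff_mul_le hpow).mpr h2
      simp only [Finset.mem_range]
      omega
    have hcard : (Q ℓ).card ≤ B := by
      calc (Q ℓ).card ≤ (Finset.range B).card := Finset.card_le_card hsubQ
        _ = B := Finset.card_range B
    rcases Nat.eq_zero_or_pos (n / 2 ^ ℓ) with hz | hpos
    · have hB0 : B = 0 := by omega
      have : (Q ℓ).card = 0 := by omega
      simp [this]
    · have hBle : B ≤ n / 2 ^ ℓ := by omega
      calc (Q ℓ).card * 2 ^ ℓ ≤ (n / 2 ^ ℓ) * 2 ^ ℓ :=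
            Nat.mul_le_mul_right _ (hcard.trans hBle)
        _ ≤ n := Nat.div_mul_le_self n (2 ^ ℓ)
  have hGbound : ∫ ω, G ω ∂μ ≤ (Hh : ℝ) * (((n : ℝ) * N) * v) := by
    have hint1 : ∀ ℓ ∈ Finset.range Hh, Integrable (fun ω => ∑ m ∈ Q ℓ,
        (U (m₁ + 2 ^ (ℓ + 1) * m + 2 ^ ℓ) ω - U (m₁ + 2 ^ (ℓ + 1) * m) ω) ^ 2) μ := by
      intro ℓ _
      apply integrable_finset_sum
      intro m _
      have := ((hUmem (m₁ + 2 ^ (ℓ + 1) * m + 2 ^ ℓ)).sub (hUmem (m₁ + 2 ^ (ℓ + 1) * m))).integrable_sq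
      simpa [Pi.sub_apply] using this
    rw [hG]
    rw [integral_finset_sum _ hint1]
    calc ∑ ℓ ∈ Finset.range Hh, ∫ ω, (∑ m ∈ Q ℓ,
          (U (m₁ + 2 ^ (ℓ + 1) * m + 2 ^ ℓ) ω - U (m₁ + 2 ^ (ℓ + 1) * m) ω) ^ 2) ∂μ
        ≤ ∑ _ℓ ∈ Finset.range Hh, ((n : ℝ) * N) * v := by
          apply Finset.sum_le_sum
          intro ℓ _
          have hint2 : ∀ m ∈ Q ℓ, Integrable (fun ω =>
              (U (m₁ + 2 ^ (ℓ + 1) * m + 2 ^ ℓ) ω - U (m₁ + 2 ^ (ℓ + 1) * m) ω) ^ 2) μ := by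
            intro m _
            have := ((hUmem (m₁ + 2 ^ (ℓ + 1) * m + 2 ^ ℓ)).sub
              (hUmem (m₁ + 2 ^ (ℓ + 1) * m))).integrable_sq
            simpa [Pi.sub_apply] using this
          rw [integral_finset_sum _ hint2]
          have hper : ∀ m ∈ Q ℓ, ∫ ω,
              (U (m₁ + 2 ^ (ℓ + 1) * m + 2 ^ ℓ) ω - U (m₁ + 2 ^ (ℓ + 1) * m) ω) ^ 2 ∂μ
              ≤ ((2 : ℝ) ^ ℓ * N) * v := by
            intro m hm
            rw [hQ] at hm
            simp only [Finset.mem_filter, Finset.mem_range] at hm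
            have hb : (m₁ + 2 ^ (ℓ + 1) * m) + 2 ^ ℓ ≤ N := by omega
            have h := hvard (m₁ + 2 ^ (ℓ + 1) * m) (2 ^ ℓ) hb
            have hcast : ((2 ^ ℓ : ℕ) : ℝ) = (2 : ℝ) ^ ℓ := by push_cast; ring
            rw [hcast] at h
            rw [show m₁ + 2 ^ (ℓ + 1) * m + 2 ^ ℓ = (m₁ + 2 ^ (ℓ + 1) * m) + 2 ^ ℓ by ring]
            exact h
          calc ∑ m ∈ Q ℓ, ∫ ω,
                (U (m₁ + 2 ^ (ℓ + 1) * m + 2 ^ ℓ) ω - U (m₁ + 2 ^ (ℓ + 1) * m) ω) ^ 2 ∂μ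
              ≤ ∑ _m ∈ Q ℓ, ((2 : ℝ) ^ ℓ * N) * v := Finset.sum_le_sum hper
            _ = ((Q ℓ).card : ℝ) * (((2 : ℝ) ^ ℓ * N) * v) := by
                rw [Finset.sum_const, nsmul_eq_mul]
            _ ≤ ((n : ℝ) * N) * v := by
                have h1 : ((Q ℓ).card : ℝ) * (2 : ℝ) ^ ℓ ≤ (n : ℝ) := by
                  have := hQcard ℓ
                  have hc : (((Q ℓ).card * 2 ^ ℓ : ℕ) : ℝ) ≤ (n : ℝ) := by exact_mod_cast this
                  push_cast at hc
                  linarith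
                have hNv : (0 : ℝ) ≤ (N : ℝ) * v := by positivity
                calc ((Q ℓ).card : ℝ) * (((2 : ℝ) ^ ℓ * N) * v)
                    = (((Q ℓ).card : ℝ) * (2 : ℝ) ^ ℓ) * ((N : ℝ) * v) := by ring
                  _ ≤ (n : ℝ) * ((N : ℝ) * v) := mul_le_mul_of_nonneg_right h1 hNv
                  _ = ((n : ℝ) * N) * v := by ring
      _ = (Hh : ℝ) * (((n : ℝ) * N) * v) := by
          rw [Finset.sum_const, Finset.card_range, nsmul_eq_mul]
  -- pointwise bound for the supremum
  have hpt : ∀ ω : Ω, (⨆ k ∈ Finset.Icc m₁ m₂,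
      (∑ i ∈ Finset.Icc 1 k, ∑ j ∈ Finset.Icc 1 (N - k), y i (N - j + 1) ω) ^ 2)
      ≤ 2 * (U m₁ ω) ^ 2 + (2 * (Hh : ℝ)) * G ω := by
    intro ω
    have hrhs_nn : 0 ≤ 2 * (U m₁ ω) ^ 2 + (2 * (Hh : ℝ)) * G ω := by
      have := hGnn ω
      positivity
    apply ciSup_le
    intro k
    by_cases hk : k ∈ Finset.Icc m₁ m₂
    · rw [ciSup_pos hk]
      have hkm := Finset.mem_Icc.mp hk
      have hkN : k ≤ N := by omega
      rw [hre k hkN ω]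
      have hch := hchain (k - m₁) (by omega) ω
      rw [show m₁ + (k - m₁) = k by omega] at hch
      nlinarith [sq_nonneg (U k ω - 2 * U m₁ ω), hGnn ω]
    · haveI : IsEmpty (k ∈ Finset.Icc m₁ m₂ : Prop) := ⟨hk⟩
      rw [Real.iSup_of_isEmpty]
      exact hrhs_nn
  have hnnsup : ∀ ω : Ω, 0 ≤ ⨆ k ∈ Finset.Icc m₁ m₂,
      (∑ i ∈ Finset.Icc 1 k, ∑ j ∈ Finset.Icc 1 (N - k), y i (N - j + 1) ω) ^ 2 :=
    fun ω => Real.iSup_nonneg fun k => Real.iSup_nonneg fun _ => sq_nonneg _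
  have hRHSint : Integrable (fun ω => 2 * (U m₁ ω) ^ 2 + (2 * (Hh : ℝ)) * G ω) μ := by
    apply Integrable.add
    · exact ((hUmem m₁).integrable_sq).const_mul 2
    · exact hGint.const_mul _
  -- put it together
  have hmain : ∫ ω, (⨆ k ∈ Finset.Icc m₁ m₂,
      (∑ i ∈ Finset.Icc 1 k, ∑ j ∈ Finset.Icc 1 (N - k), y i (N - j + 1) ω) ^ 2) ∂μ
      ≤ 2 * (((m₁ : ℝ) * ((N - m₁ : ℕ) : ℝ)) * v)
        + (2 * (Hh : ℝ)) * ((Hh : ℝ) * (((n : ℝ) * N) * v)) := by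
    calc ∫ ω, (⨆ k ∈ Finset.Icc m₁ m₂,
          (∑ i ∈ Finset.Icc 1 k, ∑ j ∈ Finset.Icc 1 (N - k), y i (N - j + 1) ω) ^ 2) ∂μ
        ≤ ∫ ω, (2 * (U m₁ ω) ^ 2 + (2 * (Hh : ℝ)) * G ω) ∂μ :=
          integral_mono_of_nonneg (Filter.Eventually.of_forall hnnsup) hRHSint
            (Filter.Eventually.of_forall hpt)
      _ = 2 * ∫ ω, (U m₁ ω) ^ 2 ∂μ + (2 * (Hh : ℝ)) * ∫ ω, G ω ∂μ := by
          rw [integral_add (((hUmem m₁).integrable_sq).const_mul 2) (hGint.const_mul _),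
            integral_const_mul, integral_const_mul]
      _ ≤ 2 * (((m₁ : ℝ) * ((N - m₁ : ℕ) : ℝ)) * v)
          + (2 * (Hh : ℝ)) * ((Hh : ℝ) * (((n : ℝ) * N) * v)) := by
          apply add_le_add
          · exact mul_le_mul_of_nonneg_left hvar0 (by norm_num)
          · exact mul_le_mul_of_nonneg_left hGbound (by positivity)
  -- final numeric estimate
  set R : ℝ := ((N - m₁ : ℕ) : ℝ) with hR
  have hR2 : (2 : ℝ) ≤ R := by
    rw [hR]; exact_mod_cast (by omega : 2 ≤ N - m₁)
  set a : ℝ := Real.logb 2 (m₁ : ℝ) with ha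
  set b : ℝ := Real.logb 2 R with hb
  have hlog4 : Real.logb 2 4 = 2 := by
    rw [show (4 : ℝ) = 2 ^ (2 : ℕ) by norm_num, Real.logb_pow,
      Real.logb_self_eq_one (by norm_num : (1 : ℝ) < 2)]
    norm_num
  have hlog1 : Real.logb 2 (4 * (m₁ : ℝ)) = 2 + a := by
    rw [Real.logb_mul (by norm_num) (by exact_mod_cast Nat.one_le_iff_ne_zero.mp hm₁), hlog4]
  have hlog2 : Real.logb 2 (4 * R) = 2 + b := by
    rw [Real.logb_mul (by norm_num) (by linarith), hlog4]
  have ha0 : 0 ≤ a := Real.logb_nonneg (by norm_num) (by exact_mod_cast hm₁)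
  have hb1 : 1 ≤ b := by
    have := Real.logb_le_logb_of_le (b := 2) (by norm_num) (by norm_num : (0:ℝ) < 2) hR2
    rwa [Real.logb_self_eq_one (by norm_num : (1:ℝ) < 2)] at this
  have hHhb : (Hh : ℝ) ≤ 1 + b := by
    have hpl : 2 ^ Nat.log 2 n ≤ n := Nat.pow_log_le_self 2 (by omega)
    have hnR : (n : ℝ) ≤ R := by rw [hR]; exact_mod_cast (by omega : n ≤ N - m₁)
    have h2L : ((2 : ℝ)) ^ (Nat.log 2 n) ≤ R := by
      have : ((2 ^ Nat.log 2 n : ℕ) : ℝ) ≤ (n : ℝ) := by exact_mod_cast hpl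
      push_cast at this
      linarith
    have hlb : (Nat.log 2 n : ℝ) ≤ b := by
      have h1 : Real.logb 2 ((2 : ℝ) ^ (Nat.log 2 n)) ≤ Real.logb 2 R :=
        Real.logb_le_logb_of_le (by norm_num) (by positivity) h2L
      rwa [Real.logb_pow, Real.logb_self_eq_one (by norm_num : (1:ℝ) < 2), mul_one] at h1
    rw [hHh]
    push_cast
    linarith
  have hnN : (n : ℝ) * N ≤ (m₂ : ℝ) * R := by
    have hnat : n * N ≤ m₂ * (N - m₁) := by
      have h1 : n + m₁ = m₂ := by omega
      have h2 : (N - m₁) + m₁ = N := by omega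
      nlinarith [Nat.mul_le_mul_right m₁ (show n ≤ N - m₁ by omega)]
    rw [hR]
    exact_mod_cast hnat
  have hm₁m₂ : (m₁ : ℝ) ≤ (m₂ : ℝ) := by exact_mod_cast hm.le
  have hm₂pos : (0 : ℝ) < (m₂ : ℝ) := by exact_mod_cast (by omega : 0 < m₂)
  have hHh0 : (0 : ℝ) ≤ (Hh : ℝ) := Nat.cast_nonneg _
  calc ∫ ω, (⨆ k ∈ Finset.Icc m₁ m₂,
        (∑ i ∈ Finset.Icc 1 k, ∑ j ∈ Finset.Icc 1 (N - k), y i (N - j + 1) ω) ^ 2) ∂μ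
      ≤ 2 * (((m₁ : ℝ) * R) * v) + (2 * (Hh : ℝ)) * ((Hh : ℝ) * (((n : ℝ) * N) * v)) := hmain
    _ ≤ 2 * (((m₂ : ℝ) * R) * v) + 2 * (1 + b) ^ 2 * (((m₂ : ℝ) * R) * v) := by
        have hR0 : (0 : ℝ) ≤ R := by linarith
        apply add_le_add
        · calc 2 * (((m₁ : ℝ) * R) * v) = (m₁ : ℝ) * (2 * (R * v)) := by ring
            _ ≤ (m₂ : ℝ) * (2 * (R * v)) := by
                apply mul_le_mul_of_nonneg_right hm₁m₂
                positivity
            _ = 2 * (((m₂ : ℝ) * R) * v) := by ring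
        · have hHsq : (Hh : ℝ) * (Hh : ℝ) ≤ (1 + b) * (1 + b) :=
            mul_le_mul hHhb hHhb hHh0 (by linarith)
          have hnNv : ((n : ℝ) * N) * v ≤ ((m₂ : ℝ) * R) * v :=
            mul_le_mul_of_nonneg_right hnN hv.le
          have h2 : (0 : ℝ) ≤ ((n : ℝ) * N) * v := by positivity
          have h3 : (0 : ℝ) ≤ (1 + b) * (1 + b) := mul_nonneg (by linarith) (by linarith)
          calc (2 * (Hh : ℝ)) * ((Hh : ℝ) * (((n : ℝ) * N) * v))
              = ((Hh : ℝ) * (Hh : ℝ)) * (2 * (((n : ℝ) * N) * v)) := by ring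
            _ ≤ ((1 + b) * (1 + b)) * (2 * (((n : ℝ) * N) * v)) :=
                mul_le_mul_of_nonneg_right hHsq (by linarith)
            _ = ((1 + b) * (1 + b)) * 2 * (((n : ℝ) * N) * v) := by ring
            _ ≤ ((1 + b) * (1 + b)) * 2 * (((m₂ : ℝ) * R) * v) :=
                mul_le_mul_of_nonneg_left hnNv (by linarith)
            _ = 2 * (1 + b) ^ 2 * (((m₂ : ℝ) * R) * v) := by ring
    _ ≤ ((2 + a) * (2 + b)) ^ 2 * (((m₂ : ℝ) * R) * v) := by
        have hR0 : (0 : ℝ) ≤ R := by linarith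
        have hbase : (0 : ℝ) ≤ ((m₂ : ℝ) * R) * v := by positivity
        have hkey : 2 + 2 * (1 + b) ^ 2 ≤ ((2 + a) * (2 + b)) ^ 2 := by
          nlinarith [mul_nonneg ha0 (by linarith : (0:ℝ) ≤ b), sq_nonneg (1 + b), sq_nonneg b, ha0, hb1,
            mul_nonneg (mul_nonneg ha0 ha0) (sq_nonneg (2 + b)), sq_nonneg (2 + b),
            mul_nonneg ha0 (sq_nonneg (2 + b))]
        calc 2 * (((m₂ : ℝ) * R) * v) + 2 * (1 + b) ^ 2 * (((m₂ : ℝ) * R) * v)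
            = (2 + 2 * (1 + b) ^ 2) * (((m₂ : ℝ) * R) * v) := by ring
          _ ≤ ((2 + a) * (2 + b)) ^ 2 * (((m₂ : ℝ) * R) * v) :=
              mul_le_mul_of_nonneg_right hkey hbase
    _ = (Real.logb 2 (4 * (m₁ : ℝ)) * Real.logb 2 (4 * R)) ^ 2 * (m₂ : ℝ) * R * v := by
        rw [hlog1, hlog2]; ring
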